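/- Let A ⊆ R ⊆ S be commutative Noetherian rings such that the inclusion R ⊆ S admits an R-linear splitting β : S → R (β|_R = id_R), and let M ⊆ N be a differential direct summand compatible with β. If V and W are D_{R|A}-submodules of M such that the D_{S|A}-submodules of N generated by V and by W coincide (D_{S|A}·V = D_{S|A}·W), then V = W. -/
import Mathlib


/-- `δ` is an `A`-linear differential operator on `R` of order at most `n`. -/
def IsDiffOpOfOrder (A : Type*) {R : Type*} [CommRing A] [CommRing R] [Algebra A R] :
    ℕ → (R →ₗ[A] R) → Prop
  | 0 => fun δ => ∃ r : R, ∀ x, δ x = r * x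
  | (n+1) => fun δ => ∀ r : R,
      IsDiffOpOfOrder A n (δ ∘ₗ LinearMap.mulLeft A r - LinearMap.mulLeft A r ∘ₗ δ)

/-- `δ` is an `A`-linear differential operator on `R`. -/
def IsDiffOp (A : Type*) {R : Type*} [CommRing A] [CommRing R] [Algebra A R]
    (δ : R →ₗ[A] R) : Prop :=
  ∃ n, IsDiffOpOfOrder A n δ

/-- Restriction `β ∘ δ|_R` of a differential operator `δ` on `S` along the
`R`-linear splitting `β : S → R`. -/
def restrictOp (A R S : Type*) [CommRing A] [CommRing R] [CommRing S]
    [Algebra A R] [Algebra A S] [Algebra R S] [IsScalarTower A R S]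
    (β : S →ₗ[R] R) (δ : S →ₗ[A] S) : R →ₗ[A] R :=
  (β.restrictScalars A) ∘ₗ δ ∘ₗ ((IsScalarTower.toAlgHom A R S).toLinearMap)

/-- A `D_{R|A}`-module structure on an `R`-module `M`. -/
structure DAction (A R : Type*) [CommRing A] [CommRing R] [Algebra A R]
    (M : Type*) [AddCommGroup M] [Module A M] [Module R M] [IsScalarTower A R M] where
  act : (R →ₗ[A] R) → (M →ₗ[A] M)
  act_mulLeft : ∀ (r : R) (m : M), act (LinearMap.mulLeft A r) m = r • m
  act_add : ∀ δ₁ δ₂, IsDiffOp A δ₁ → IsDiffOp A δ₂ → act (δ₁ + δ₂) = act δ₁ + act δ₂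
  act_comp : ∀ δ₁ δ₂, IsDiffOp A δ₁ → IsDiffOp A δ₂ → act (δ₁ ∘ₗ δ₂) = act δ₁ ∘ₗ act δ₂

/-- The tautological `D_{R|A}`-module structure on `R` itself. -/
def tautDAction (A R : Type*) [CommRing A] [CommRing R] [Algebra A R] : DAction A R R where
  act δ := δ
  act_mulLeft r m := by simp [LinearMap.mulLeft_apply, smul_eq_mul]
  act_add _ _ _ _ := rfl
  act_comp _ _ _ _ := rfl

/-- A differential direct summand `M ⊆ N` compatible with the splitting `β`. -/
structure DiffDirectSummand {A R S : Type*} [CommRing A] [CommRing R] [CommRing S]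
    [Algebra A R] [Algebra A S] [Algebra R S] [IsScalarTower A R S]
    (β : S →ₗ[R] R)
    {M : Type*} [AddCommGroup M] [Module A M] [Module R M] [IsScalarTower A R M]
    {N : Type*} [AddCommGroup N] [Module A N] [Module R N] [Module S N]
    [IsScalarTower A S N] [IsScalarTower R S N] [IsScalarTower A R N]
    (actM : DAction A R M) (actN : DAction A S N) where
  incl : M →ₗ[R] N
  incl_injective : Function.Injective incl
  theta : N →ₗ[R] M
  split : ∀ m : M, theta (incl m) = m
  compat : ∀ (δ : S →ₗ[A] S), IsDiffOp A δ → ∀ m : M,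
      theta (actN.act δ (incl m)) = actM.act (restrictOp A R S β δ) m

/-- `V` is a `D_{R|A}`-submodule of `M`. -/
def DAction.IsDSubmodule {A R : Type*} [CommRing A] [CommRing R] [Algebra A R]
    {M : Type*} [AddCommGroup M] [Module A M] [Module R M] [IsScalarTower A R M]
    (a : DAction A R M) (V : Submodule R M) : Prop :=
  ∀ δ : R →ₗ[A] R, IsDiffOp A δ → ∀ v ∈ V, a.act δ v ∈ V

/-- The length of `M` as a `D_{R|A}`-module: the supremum of lengths of chains of
`D_{R|A}`-submodules of `M`. -/
noncomputable def dLength {A R : Type*} [CommRing A] [CommRing R] [Algebra A R]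
    {M : Type*} [AddCommGroup M] [Module A M] [Module R M] [IsScalarTower A R M]
    (a : DAction A R M) : WithBot ℕ∞ :=
  Order.krullDim {V : Submodule R M // a.IsDSubmodule V}

/-- The canonical (localized) `D`-module structure on a localization: the one making
the localization map equivariant. -/
def IsLocalizedDAction {A R : Type*} [CommRing A] [CommRing R] [Algebra A R]
    {M Mf : Type*} [AddCommGroup M] [Module A M] [Module R M] [IsScalarTower A R M]
    [AddCommGroup Mf] [Module A Mf] [Module R Mf] [IsScalarTower A R Mf]
    (ℓ : M →ₗ[R] Mf) (a : DAction A R M) (a' : DAction A R Mf) : Prop :=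
  ∀ δ : R →ₗ[A] R, IsDiffOp A δ → ∀ m : M, a'.act δ (ℓ m) = ℓ (a.act δ m)

/-- A morphism of differential direct summands. -/
structure IsDDSHom {A R S : Type*} [CommRing A] [CommRing R] [CommRing S]
    [Algebra A R] [Algebra A S] [Algebra R S] [IsScalarTower A R S]
    {β : S →ₗ[R] R}
    {M₁ : Type*} [AddCommGroup M₁] [Module A M₁] [Module R M₁] [IsScalarTower A R M₁]
    {N₁ : Type*} [AddCommGroup N₁] [Module A N₁] [Module R N₁] [Module S N₁]
    [IsScalarTower A S N₁] [IsScalarTower R S N₁] [IsScalarTower A R N₁]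
    {M₂ : Type*} [AddCommGroup M₂] [Module A M₂] [Module R M₂] [IsScalarTower A R M₂]
    {N₂ : Type*} [AddCommGroup N₂] [Module A N₂] [Module R N₂] [Module S N₂]
    [IsScalarTower A S N₂] [IsScalarTower R S N₂] [IsScalarTower A R N₂]
    {actM₁ : DAction A R M₁} {actN₁ : DAction A S N₁}
    {actM₂ : DAction A R M₂} {actN₂ : DAction A S N₂}
    (dds₁ : DiffDirectSummand β actM₁ actN₁) (dds₂ : DiffDirectSummand β actM₂ actN₂)
    (φ : N₁ →ₗ[S] N₂) (ψ : M₁ →ₗ[R] M₂) : Prop where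
  comm_incl : ∀ m : M₁, φ (dds₁.incl m) = dds₂.incl (ψ m)
  equivN : ∀ δ : S →ₗ[A] S, IsDiffOp A δ → ∀ x : N₁, φ (actN₁.act δ x) = actN₂.act δ (φ x)
  equivM : ∀ δ : R →ₗ[A] R, IsDiffOp A δ → ∀ m : M₁, ψ (actM₁.act δ m) = actM₂.act δ (ψ m)
  comm_theta : ∀ x : N₁, ψ (dds₁.theta x) = dds₂.theta (φ x)

/-- The `D_{S|A}`-submodule of `N` generated by a submodule `V` of `M`. -/
def dSpan {A R S : Type*} [CommRing A] [CommRing R] [CommRing S]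
    [Algebra A R] [Algebra A S] [Algebra R S] [IsScalarTower A R S]
    {β : S →ₗ[R] R}
    {M : Type*} [AddCommGroup M] [Module A M] [Module R M] [IsScalarTower A R M]
    {N : Type*} [AddCommGroup N] [Module A N] [Module R N] [Module S N]
    [IsScalarTower A S N] [IsScalarTower R S N] [IsScalarTower A R N]
    {actM : DAction A R M} {actN : DAction A S N}
    (dds : DiffDirectSummand β actM actN) (V : Submodule R M) : Submodule S N :=
  Submodule.span S {x : N | ∃ δ : S →ₗ[A] S, IsDiffOp A δ ∧ ∃ v ∈ V, x = actN.act δ (dds.incl v)}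

lemma isDiffOp_mulLeft {A R : Type*} [CommRing A] [CommRing R] [Algebra A R] (r : R) :
    IsDiffOp A (LinearMap.mulLeft A r) :=
  ⟨0, r, fun x => rfl⟩

lemma isDiffOpOfOrder_mulLeft_comp {A R : Type*} [CommRing A] [CommRing R] [Algebra A R]
    (s : R) : ∀ (n : ℕ) (δ : R →ₗ[A] R), IsDiffOpOfOrder A n δ →
      IsDiffOpOfOrder A n (LinearMap.mulLeft A s ∘ₗ δ)
  | 0, δ, ⟨r, hr⟩ => ⟨s * r, fun x => by
      simp [LinearMap.mulLeft_apply, hr x, mul_assoc]⟩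
  | (n+1), δ, hδ => fun r => by
      have heq : (LinearMap.mulLeft A s ∘ₗ δ) ∘ₗ LinearMap.mulLeft A r -
          LinearMap.mulLeft A r ∘ₗ (LinearMap.mulLeft A s ∘ₗ δ) =
          LinearMap.mulLeft A s ∘ₗ
            (δ ∘ₗ LinearMap.mulLeft A r - LinearMap.mulLeft A r ∘ₗ δ) := by
        ext x
        simp [LinearMap.mulLeft_apply, mul_sub]
        ring
      rw [heq]
      exact isDiffOpOfOrder_mulLeft_comp s n _ (hδ r)

lemma isDiffOp_mulLeft_comp {A R : Type*} [CommRing A] [CommRing R] [Algebra A R]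
    (s : R) {δ : R →ₗ[A] R} (hδ : IsDiffOp A δ) :
    IsDiffOp A (LinearMap.mulLeft A s ∘ₗ δ) :=
  hδ.imp fun n hn => isDiffOpOfOrder_mulLeft_comp s n δ hn

lemma isDiffOpOfOrder_restrictOp {A R S : Type*} [CommRing A] [CommRing R] [CommRing S]
    [Algebra A R] [Algebra A S] [Algebra R S] [IsScalarTower A R S]
    (β : S →ₗ[R] R) : ∀ (n : ℕ) (δ : S →ₗ[A] S), IsDiffOpOfOrder A n δ →
      IsDiffOpOfOrder A n (restrictOp A R S β δ)
  | 0, δ, ⟨s, hs⟩ => ⟨β s, fun x => by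
      have : δ (algebraMap R S x) = x • s := by
        rw [hs, Algebra.smul_def]; exact mul_comm _ _
      simp only [restrictOp, LinearMap.comp_apply, LinearMap.restrictScalars_apply,
        AlgHom.toLinearMap_apply, IsScalarTower.coe_toAlgHom']
      rw [this, map_smul, smul_eq_mul, mul_comm]⟩
  | (n+1), δ, hδ => fun r => by
      have heq : restrictOp A R S β δ ∘ₗ LinearMap.mulLeft A r -
          LinearMap.mulLeft A r ∘ₗ restrictOp A R S β δ =
          restrictOp A R S β (δ ∘ₗ LinearMap.mulLeft A (algebraMap R S r) -
            LinearMap.mulLeft A (algebraMap R S r) ∘ₗ δ) := by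
        ext x
        have h1 : (algebraMap R S) (r * x) = algebraMap R S r * algebraMap R S x :=
          map_mul _ _ _
        have h2 : algebraMap R S r * δ (algebraMap R S x) = r • δ (algebraMap R S x) :=
          (Algebra.smul_def r _).symm
        simp only [restrictOp, LinearMap.sub_apply, LinearMap.comp_apply,
          LinearMap.restrictScalars_apply, AlgHom.toLinearMap_apply,
          IsScalarTower.coe_toAlgHom', LinearMap.mulLeft_apply, map_sub]
        rw [h1, h2, map_smul, smul_eq_mul]
      rw [heq]
      exact isDiffOpOfOrder_restrictOp β n _ (hδ (algebraMap R S r))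

lemma isDiffOp_restrictOp {A R S : Type*} [CommRing A] [CommRing R] [CommRing S]
    [Algebra A R] [Algebra A S] [Algebra R S] [IsScalarTower A R S]
    (β : S →ₗ[R] R) {δ : S →ₗ[A] S} (hδ : IsDiffOp A δ) :
    IsDiffOp A (restrictOp A R S β δ) :=
  hδ.imp fun n hn => isDiffOpOfOrder_restrictOp β n δ hn

/-- Lemma `LemmaEqSubmod`.  Let `A ⊆ R ⊆ S` be Noetherian rings such
that the inclusion `R ⊆ S` has an `R`-linear splitting `β`, and let `M ⊆ N` be a
differential direct summand compatible with `β`.  If `V, W` are `D_{R|A}`-submodules of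
`M` with `D_{S|A}·V = D_{S|A}·W` inside `N`, then `V = W`. -/
theorem eq_of_dSpan_eq
    (A R S : Type*) [CommRing A] [CommRing R] [CommRing S]
    [IsNoetherianRing A] [IsNoetherianRing R] [IsNoetherianRing S]
    [Algebra A R] [Algebra A S] [Algebra R S] [IsScalarTower A R S]
    (hAR : Function.Injective (algebraMap A R))
    (hRS : Function.Injective (algebraMap R S))
    (β : S →ₗ[R] R) (hβ : ∀ r : R, β (algebraMap R S r) = r)
    (M : Type*) [AddCommGroup M] [Module A M] [Module R M] [IsScalarTower A R M]
    (N : Type*) [AddCommGroup N] [Module A N] [Module R N] [Module S N]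
    [IsScalarTower A S N] [IsScalarTower R S N] [IsScalarTower A R N]
    (actM : DAction A R M) (actN : DAction A S N)
    (dds : DiffDirectSummand β actM actN)
    (V W : Submodule R M) (hV : actM.IsDSubmodule V) (hW : actM.IsDSubmodule W)
    (h : dSpan dds V = dSpan dds W) : V = W := by
  have key : ∀ (V W : Submodule R M), actM.IsDSubmodule W →
      dSpan dds V ≤ dSpan dds W → V ≤ W := by
    intro V W hW hle v hv
    have hone : IsDiffOp A (LinearMap.mulLeft A (1 : S)) := isDiffOp_mulLeft 1
    have hmem : dds.incl v ∈ dSpan dds V :=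
      Submodule.subset_span ⟨LinearMap.mulLeft A (1 : S), hone, v, hv, by
        rw [actN.act_mulLeft, one_smul]⟩
    have hmem2 : dds.incl v ∈ dSpan dds W := hle hmem
    have hth : ∀ x ∈ dSpan dds W, ∀ s : S, dds.theta (s • x) ∈ W := by
      intro x hx
      induction hx using Submodule.span_induction with
      | mem x hxs =>
          obtain ⟨δ, hδ, w, hw, rfl⟩ := hxs
          intro s
          have hc : s • actN.act δ (dds.incl w) =
              actN.act (LinearMap.mulLeft A s ∘ₗ δ) (dds.incl w) := by
            rw [actN.act_comp _ _ (isDiffOp_mulLeft s) hδ, LinearMap.comp_apply,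
              actN.act_mulLeft]
          rw [hc, dds.compat _ (isDiffOp_mulLeft_comp s hδ)]
          exact hW _ (isDiffOp_restrictOp β (isDiffOp_mulLeft_comp s hδ)) w hw
      | zero => intro s; rw [smul_zero, map_zero]; exact W.zero_mem
      | add x y _ _ ihx ihy =>
          intro s
          rw [smul_add, map_add]
          exact W.add_mem (ihx s) (ihy s)
      | smul s x _ ih =>
          intro s'
          rw [smul_smul]
          exact ih (s' * s)
    have := hth _ hmem2 1
    rwa [one_smul, dds.split] at this
  exact le_antisymm (key V W hW h.le) (key W V hV h.ge)
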